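/- A minimal codirect solution has at most |Q| synchronization points: let A, B be types, Q a finite type, M : NFA A Q a Mathlib NFA, and σ σ' : A → List B. Suppose w is a codirect solution for M (w.r.t. σ, σ') of minimal length, i.e. every codirect solution w' satisfies w.length ≤ w'.length, and let vs be any witness for w. Then the number of indices s with 0 ≤ s ≤ w.length and ((w.take s).flatMap σ).length = ((vs.take s).flatten).length is at most Fintype.card Q; formally, ((Finset.range (w.length + 1)).filter (fun s => ((w.take s).flatMap σ).length = ((vs.take s).flatten).length)).card ≤ Fintype.card Q. -/

import Mathlib

/-- `w` is a codirect solution for the NFA `M` with respect to the morphisms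
`σ, σ'`, witnessed by `vs`. -/
def CodirectWitness {A B Q : Type*} (M : NFA A Q) (σ σ' : A → List B)
    (w : List A) (vs : List (List B)) : Prop :=
  w ∈ M.accepts ∧ ∃ h : vs.length = w.length,
    (∀ k, ∀ hk : k < w.length, (vs.get ⟨k, by omega⟩).Sublist (σ' (w.get ⟨k, hk⟩))) ∧
    w.flatMap σ = vs.flatten ∧
    ∀ k ≤ w.length, ((vs.take k).flatten).length ≤ ((w.take k).flatMap σ).length

/-- `w` is a strict codirect solution for the NFA `M` with respect to `σ, σ'`,
witnessed by `vs`. -/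
def StrictCodirectWitness {A B Q : Type*} (M : NFA A Q) (σ σ' : A → List B)
    (w : List A) (vs : List (List B)) : Prop :=
  CodirectWitness M σ σ' w vs ∧
    ∀ k, 1 ≤ k → k < w.length →
      ((vs.take k).flatten).length < ((w.take k).flatMap σ).length

private theorem evalFrom_mono' {A Q : Type*} (M : NFA A Q) {S T : Set Q} (h : S ⊆ T) :
    ∀ v : List A, M.evalFrom S v ⊆ M.evalFrom T v := by
  intro v
  induction v generalizing S T with
  | nil => simpa using h
  | cons a v ih =>
    have hst : M.stepSet S a ⊆ M.stepSet T a := by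
      intro q hq
      rw [NFA.mem_stepSet] at hq ⊢
      obtain ⟨p, hp, hq⟩ := hq
      exact ⟨p, h hp, hq⟩
    exact ih hst

private theorem evalFrom_append' {A Q : Type*} (M : NFA A Q) (S : Set Q) (u v : List A) :
    M.evalFrom S (u ++ v) = M.evalFrom (M.evalFrom S u) v := by
  simp [NFA.evalFrom, List.foldl_append]

private theorem exists_mid' {A Q : Type*} (M : NFA A Q) :
    ∀ (v : List A) (S : Set Q) (q : Q), q ∈ M.evalFrom S v →
      ∃ p ∈ S, q ∈ M.evalFrom {p} v := by
  intro v
  induction v with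
  | nil => intro S q hq; exact ⟨q, hq, rfl⟩
  | cons a v ih =>
    intro S q hq
    have hq' : q ∈ M.evalFrom (M.stepSet S a) v := hq
    obtain ⟨p', hp', hq'⟩ := ih _ _ hq'
    rw [NFA.mem_stepSet] at hp'
    obtain ⟨p, hp, hp'⟩ := hp'
    refine ⟨p, hp, ?_⟩
    have hsub : M.evalFrom {p'} v ⊆ M.evalFrom (M.stepSet {p} a) v := by
      apply evalFrom_mono'
      intro x hx
      rw [Set.mem_singleton_iff] at hx
      rw [NFA.mem_stepSet]
      exact ⟨p, rfl, hx ▸ hp'⟩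
    exact hsub hq'

/-- A minimal codirect solution has at most `|Q|` synchronization points. -/
theorem minimal_codirect_sync_points_le_card {A B Q : Type*} [Fintype Q]
    (M : NFA A Q) (σ σ' : A → List B) (w : List A) (vs : List (List B))
    (hw : CodirectWitness M σ σ' w vs)
    (hmin : ∀ w' vs', CodirectWitness M σ σ' w' vs' → w.length ≤ w'.length) :
    ((Finset.range (w.length + 1)).filter
        (fun s => ((w.take s).flatMap σ).length = ((vs.take s).flatten).length)).card
      ≤ Fintype.card Q := by
  classical
  obtain ⟨hacc, hv, hsub, heq, hle⟩ := hw
  set n := w.length with hn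
  obtain ⟨qf, hqfacc, hqf⟩ := hacc
  have key : ∀ s : ℕ, ∃ p, p ∈ M.evalFrom M.start (w.take s) ∧
      qf ∈ M.evalFrom {p} (w.drop s) := by
    intro s
    have h1 : qf ∈ M.evalFrom (M.evalFrom M.start (w.take s)) (w.drop s) := by
      rw [← evalFrom_append', List.take_append_drop]
      exact hqf
    obtain ⟨p, hp1, hp2⟩ := exists_mid' M _ _ _ h1
    exact ⟨p, hp1, hp2⟩
  choose f hf1 hf2 using key
  -- main cut-and-paste argument
  have main : ∀ s t : ℕ, s < t → t ≤ n →
      ((w.take s).flatMap σ).length = ((vs.take s).flatten).length →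
      ((w.take t).flatMap σ).length = ((vs.take t).flatten).length →
      f s = f t → False := by
    intro s t hst htn hsyncs hsynct hft
    have hsn : s ≤ n := by omega
    have hsv : s ≤ vs.length := by omega
    have htv : t ≤ vs.length := by omega
    have hltsw : (w.take s).length = s := by rw [List.length_take]; omega
    have hltsv : (vs.take s).length = s := by rw [List.length_take]; omega
    -- flatMap/flatten decompositions
    have hdecomp : ∀ k : ℕ,
        (w.take k).flatMap σ ++ (w.drop k).flatMap σ
          = (vs.take k).flatten ++ (vs.drop k).flatten := by
      intro k
      rw [← List.flatMap_append, ← List.flatten_append, List.take_append_drop,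
        List.take_append_drop]
      exact heq
    have heqs : (w.take s).flatMap σ = (vs.take s).flatten :=
      (List.append_inj (hdecomp s) hsyncs).1
    have heqt : (w.drop t).flatMap σ = (vs.drop t).flatten :=
      (List.append_inj (hdecomp t) hsynct).2
    -- length of partial takes
    have hLw : ∀ j, ((w.take (t + j)).flatMap σ).length
        = ((w.take t).flatMap σ).length + (((w.drop t).take j).flatMap σ).length := by
      intro j
      rw [List.take_add, List.flatMap_append, List.length_append]
    have hLv : ∀ j, ((vs.take (t + j)).flatten).length
        = ((vs.take t).flatten).length + (((vs.drop t).take j).flatten).length := by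
      intro j
      rw [List.take_add, List.flatten_append, List.length_append]
    have hlenw' : (w.take s ++ w.drop t).length = s + (n - t) := by
      simp only [List.length_append, List.length_drop, hltsw, ← hn]
    have hlenvs' : (vs.take s ++ vs.drop t).length = s + (n - t) := by
      simp only [List.length_append, List.length_drop, hltsv, hv]
    -- the spliced pair is a codirect witness
    have hcw : CodirectWitness M σ σ' (w.take s ++ w.drop t) (vs.take s ++ vs.drop t) := by
      refine ⟨⟨qf, hqfacc, ?_⟩, ?_, ?_, ?_, ?_⟩
      · -- accepted
        rw [show (M.eval (w.take s ++ w.drop t) : Set Q)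
            = M.evalFrom M.start (w.take s ++ w.drop t) from rfl,
          evalFrom_append']
        refine evalFrom_mono' M ?_ _ (hf2 t)
        rw [← hft]
        exact Set.singleton_subset_iff.mpr (hf1 s)
      · omega
      · -- sublist condition
        intro k hk
        rw [hlenw'] at hk
        simp only [List.get_eq_getElem]
        by_cases hks : k < s
        · have h1 : ((vs.take s ++ vs.drop t)[k]'(by omega) : List B)
              = vs[k]'(by omega) := by
            rw [List.getElem_append_left (by omega)]
            exact List.getElem_take
          have h2 : ((w.take s ++ w.drop t)[k]'(by rw [hlenw']; omega) : A)
              = w[k]'(by omega) := by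
            rw [List.getElem_append_left (by omega)]
            exact List.getElem_take
          rw [h1, h2]
          simpa using hsub k (by omega)
        · have hkn : t + (k - s) < n := by omega
          have h1 : ((vs.take s ++ vs.drop t)[k]'(by omega) : List B)
              = vs[t + (k - s)]'(by omega) := by
            rw [List.getElem_append_right (by omega)]
            simp only [hltsv]
            exact List.getElem_drop
          have h2 : ((w.take s ++ w.drop t)[k]'(by rw [hlenw']; omega) : A)
              = w[t + (k - s)]'(by omega) := by
            rw [List.getElem_append_right (by omega)]
            simp only [hltsw]
            exact List.getElem_drop
          rw [h1, h2]
          simpa using hsub (t + (k - s)) hkn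
      · -- flatten equality
        rw [List.flatMap_append, List.flatten_append, heqs, heqt]
      · -- prefix length inequality
        intro k hk
        rw [hlenw'] at hk
        by_cases hks : k ≤ s
        · have h1 : (w.take s ++ w.drop t).take k = w.take k := by
            rw [List.take_append_of_le_length (by omega), List.take_take,
              min_eq_left hks]
          have h2 : (vs.take s ++ vs.drop t).take k = vs.take k := by
            rw [List.take_append_of_le_length (by omega), List.take_take,
              min_eq_left hks]
          rw [h1, h2]
          exact hle k (by omega)
        · set j := k - s with hj
          have h1 : (w.take s ++ w.drop t).take k = w.take s ++ (w.drop t).take j := by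
            rw [show k = (w.take s).length + j by rw [hltsw]; omega, List.take_append,
              List.take_of_length_le (by omega), Nat.add_sub_cancel_left]
          have h2 : (vs.take s ++ vs.drop t).take k = vs.take s ++ (vs.drop t).take j := by
            rw [show k = (vs.take s).length + j by rw [hltsv]; omega, List.take_append,
              List.take_of_length_le (by omega), Nat.add_sub_cancel_left]
          rw [h1, h2, List.flatMap_append, List.flatten_append, List.length_append,
            List.length_append]
          have hle' := hle (t + j) (by omega)
          have e1 := hLw j
          have e2 := hLv j
          rw [heqs]
          omega
    have := hmin _ _ hcw
    rw [hlenw'] at this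
    omega
  -- pigeonhole
  rw [← Finset.card_univ]
  apply Finset.card_le_card_of_injOn f (fun a _ => Finset.mem_univ _)
  intro s hs t ht hft
  simp only [Finset.coe_filter, Finset.mem_range, Set.mem_setOf_eq] at hs ht
  by_contra hne
  rcases lt_or_gt_of_ne hne with h | h
  · exact main s t h (by omega) hs.2 ht.2 hft
  · exact main t s h (by omega) ht.2 hs.2 hft.symm
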